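/- For the parameterization W(κ) = arctan(e^{2κ}) - π/4 and b = π/4, the identity sin(W(κ)σ + (π/4)I) = cos(W(-κ)σ + (π/4)I) holds for any involution σ, and consequently the failed post-selection branch implements (up to normalization) the operator e^{+κσ} instead of e^{-κσ}. -/

import Mathlib

open Matrix

/-- Alternative RBM weight `W(κ) = arctan(e^{2κ}) - π/4`. -/
noncomputable def Wparam2 (κ : ℝ) : ℝ := Real.arctan (Real.exp (2 * κ)) - Real.pi / 4

/-- `cos(Wσ + bI)` for an involution `σ`, via functional calculus. -/
noncomputable def opCos {d : ℕ} (W b : ℝ) (σ : Matrix (Fin d) (Fin d) ℂ) :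
    Matrix (Fin d) (Fin d) ℂ :=
  (((Real.cos (b + W) + Real.cos (b - W)) / 2 : ℝ) : ℂ) • (1 : Matrix (Fin d) (Fin d) ℂ) +
    (((Real.cos (b + W) - Real.cos (b - W)) / 2 : ℝ) : ℂ) • σ

/-- `sin(Wσ + bI)` for an involution `σ`, via functional calculus. -/
noncomputable def opSin {d : ℕ} (W b : ℝ) (σ : Matrix (Fin d) (Fin d) ℂ) :
    Matrix (Fin d) (Fin d) ℂ :=
  (((Real.sin (b + W) + Real.sin (b - W)) / 2 : ℝ) : ℂ) • (1 : Matrix (Fin d) (Fin d) ℂ) +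
    (((Real.sin (b + W) - Real.sin (b - W)) / 2 : ℝ) : ℂ) • σ

open Nat in
set_option maxHeartbeats 1000000 in
/-- Exponential of a scalar multiple of an involution. -/
lemma exp_smul_involution {d : ℕ} (z : ℂ) (σ : Matrix (Fin d) (Fin d) ℂ)
    (hinv : σ * σ = 1) :
    NormedSpace.exp (z • σ) =
      Complex.cosh z • (1 : Matrix (Fin d) (Fin d) ℂ) + Complex.sinh z • σ := by
  have hσ2 : σ ^ 2 = 1 := by rw [sq, hinv]
  rw [NormedSpace.exp_eq_tsum (𝕂 := ℂ)]
  refine HasSum.tsum_eq ?_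
  have he : HasSum (fun k : ℕ => (((2 * k)! : ℂ)⁻¹ • (z • σ) ^ (2 * k)))
      (Complex.cosh z • (1 : Matrix (Fin d) (Fin d) ℂ)) := by
    have := (Complex.hasSum_cosh z).smul_const (1 : Matrix (Fin d) (Fin d) ℂ)
    convert this using 2 with k
    rw [smul_pow, pow_mul σ, hσ2, one_pow, smul_smul]
    congr 1
    rw [pow_mul, div_eq_mul_inv, mul_comm]
  have ho : HasSum (fun k : ℕ => (((2 * k + 1)! : ℂ)⁻¹ • (z • σ) ^ (2 * k + 1)))
      (Complex.sinh z • σ) := by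
    have := (Complex.hasSum_sinh z).smul_const σ
    convert this using 2 with k
    rw [smul_pow, pow_succ σ, pow_mul σ, hσ2, one_pow, one_mul, smul_smul]
    congr 1
    rw [pow_succ, pow_mul, div_eq_mul_inv, mul_comm]
  exact he.even_add_odd ho

/-- `sin(W(κ)σ + (π/4)I) = cos(W(-κ)σ + (π/4)I)`, and consequently the failed
post-selection branch implements `e^{+κσ}` up to normalization. -/
theorem rbm_failed_branch {d : ℕ} (κ : ℝ) (σ : Matrix (Fin d) (Fin d) ℂ)
    (hherm : σ.IsHermitian) (hinv : σ * σ = 1) :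
    opSin (Wparam2 κ) (Real.pi / 4) σ = opCos (Wparam2 (-κ)) (Real.pi / 4) σ ∧
    ∃ c : ℂ, c ≠ 0 ∧
      opSin (Wparam2 κ) (Real.pi / 4) σ = c • NormedSpace.exp ((κ : ℂ) • σ) := by
  have hWneg : Wparam2 (-κ) = - Wparam2 κ := by
    unfold Wparam2
    rw [show (2:ℝ) * -κ = -(2*κ) by ring, Real.exp_neg,
      Real.arctan_inv_of_pos (Real.exp_pos _)]
    ring
  set W := Wparam2 κ with hWdef
  have h1 : Real.cos (Real.pi/4 - W) = Real.sin (Real.pi/4 + W) := by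
    rw [show Real.pi/4 - W = Real.pi/2 - (Real.pi/4 + W) by ring, Real.cos_pi_div_two_sub]
  have h2 : Real.cos (Real.pi/4 + W) = Real.sin (Real.pi/4 - W) := by
    rw [show Real.pi/4 + W = Real.pi/2 - (Real.pi/4 - W) by ring, Real.cos_pi_div_two_sub]
  constructor
  · unfold opSin opCos
    rw [hWneg, show Real.pi/4 + -W = Real.pi/4 - W by ring,
      show Real.pi/4 - -W = Real.pi/4 + W by ring, h1, h2]
  · set t := Real.exp (2*κ) with htdef
    have ht0 : (0:ℝ) < t := Real.exp_pos _
    set r := Real.sqrt (1 + t^2) with hrdef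
    have hr0 : (0:ℝ) < r := Real.sqrt_pos.mpr (by positivity)
    have hsA : Real.sin (Real.pi/4 + W) = t / r := by
      rw [show Real.pi/4 + W = Real.arctan t by rw [hWdef]; unfold Wparam2; ring,
        Real.sin_arctan]
    have hsB : Real.sin (Real.pi/4 - W) = 1 / r := by
      rw [show Real.pi/4 - W = Real.pi/2 - Real.arctan t by rw [hWdef]; unfold Wparam2; ring,
        Real.sin_pi_div_two_sub, Real.cos_arctan]
    have ht : Real.exp κ * Real.exp κ = t := by
      rw [htdef, ← Real.exp_add]; congr 1; ring
    have hi1 : Real.exp κ * Real.exp (-κ) = 1 := by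
      rw [← Real.exp_add]; simp
    have eq1 : (t/r + 1/r)/2 = Real.exp κ / r * Real.cosh κ := by
      rw [Real.cosh_eq]
      field_simp
      linear_combination -ht - hi1
    have eq2 : (t/r - 1/r)/2 = Real.exp κ / r * Real.sinh κ := by
      rw [Real.sinh_eq]
      field_simp
      linear_combination -ht + hi1
    refine ⟨((Real.exp κ / r : ℝ) : ℂ),
      Complex.ofReal_ne_zero.mpr (by positivity), ?_⟩
    rw [exp_smul_involution (κ:ℂ) σ hinv]
    unfold opSin
    rw [hsA, hsB, ← Complex.ofReal_cosh, ← Complex.ofReal_sinh, smul_add, smul_smul, smul_smul,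
      ← Complex.ofReal_mul, ← Complex.ofReal_mul, ← eq1, ← eq2]
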